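/- If a finite simple connected graph G contains an induced house, hole, or domino, then there exist non-adjacent vertices u, v, a uv-path W of length 2, and an induced uv-path W' of length at least 3, such that W does not dominate W'. -/
import Mathlib


open SimpleGraph

/-- The internal vertices of a walk (support minus the two endpoints). -/
def internals {V : Type*} {G : SimpleGraph V} {u v : V} (W : G.Walk u v) : List V :=
  W.support.tail.dropLast

/-- A `uv`-walk `W` dominates a `uv`-walk `W'` if every internal vertex of `W'`
is adjacent to some internal vertex of `W` or belongs to `W`. -/
def Dominates {V : Type*} (G : SimpleGraph V) {u v : V} (W W' : G.Walk u v) : Prop :=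
  ∀ x ∈ internals W', x ∈ W.support ∨ ∃ y ∈ internals W, G.Adj x y

/-- An induced (chordless) path: a path such that any two vertices on it are
adjacent in `G` only if they are consecutive on the path. -/
def IsInducedPath {V : Type*} (G : SimpleGraph V) {u v : V} (W : G.Walk u v) : Prop :=
  W.IsPath ∧ ∀ a ∈ W.support, ∀ b ∈ W.support, G.Adj a b → W.toSubgraph.Adj a b

/-- `G` contains a hole: an induced (chordless) cycle of length at least 5. -/
def HasHole {V : Type*} (G : SimpleGraph V) : Prop :=
  ∃ (x : V) (c : G.Walk x x), c.IsCycle ∧ 5 ≤ c.length ∧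
    ∀ a ∈ c.support, ∀ b ∈ c.support, G.Adj a b → c.toSubgraph.Adj a b

/-- The house graph: 5-cycle `x0x1x2x3x4` plus the chord `x1x4`. -/
def houseGraph : SimpleGraph (Fin 5) :=
  SimpleGraph.fromEdgeSet {s(0,1), s(1,2), s(2,3), s(3,4), s(4,0), s(1,4)}

/-- The domino: 6-cycle `x0x1x2x3x4x5` plus the chord `x1x4`. -/
def dominoGraph : SimpleGraph (Fin 6) :=
  SimpleGraph.fromEdgeSet {s(0,1), s(1,2), s(2,3), s(3,4), s(4,5), s(5,0), s(1,4)}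

/-- The graph `X5`. -/
def x5Graph : SimpleGraph (Fin 6) :=
  SimpleGraph.fromEdgeSet {s(0,1), s(0,5), s(1,2), s(1,5), s(2,3), s(2,5), s(3,4), s(4,5)}

/-- The graph `F`. -/
def fGraph : SimpleGraph (Fin 7) :=
  SimpleGraph.fromEdgeSet {s(0,1), s(0,6), s(1,2), s(5,6), s(2,6), s(2,3), s(2,5), s(3,4), s(4,5)}


lemma toSubgraph_adj_edges {V : Type*} {G : SimpleGraph V} {u v a b : V} (w : G.Walk u v) :
    w.toSubgraph.Adj a b ↔ s(a,b) ∈ w.edges := by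
  rw [← SimpleGraph.Subgraph.mem_edgeSet, Walk.edgeSet_toSubgraph]; rfl


lemma core {V : Type*} {G : SimpleGraph V} {u m v : V}
    (h1 : G.Adj u m) (h2 : G.Adj m v) (huv : ¬ G.Adj u v) (hne : u ≠ v)
    (W' : G.Walk u v) (hW' : IsInducedPath G W') (hlen : 3 ≤ W'.length)
    (w : V) (hw : w ∈ internals W') (hwu : w ≠ u) (hwm : w ≠ m) (hwv : w ≠ v)
    (hwadj : ¬ G.Adj w m) :
    ∃ u v : V, ¬ G.Adj u v ∧ ∃ (W W' : G.Walk u v),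
      W.IsPath ∧ W.length = 2 ∧
      IsInducedPath G W' ∧ 3 ≤ W'.length ∧
      ¬ Dominates G W W' := by
  refine ⟨u, v, huv, Walk.cons h1 (Walk.cons h2 Walk.nil), W', ?_, by simp, hW', hlen, ?_⟩
  · simp [Walk.isPath_def, h1.ne, h2.ne, hne, Ne.symm h2.ne, Ne.symm hne]
  · intro hd
    rcases hd w hw with hmem | ⟨y, hy, hadj⟩
    · simp [Walk.support_cons] at hmem
      rcases hmem with rfl | rfl | rfl <;> simp_all
    · simp [internals, Walk.support_cons] at hy
      subst hy
      exact hwadj hadj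


lemma house_case {V : Type*} {G : SimpleGraph V} (f : houseGraph ↪g G) :
    ∃ u v : V, ¬ G.Adj u v ∧ ∃ (W W' : G.Walk u v),
      W.IsPath ∧ W.length = 2 ∧
      IsInducedPath G W' ∧ 3 ≤ W'.length ∧
      ¬ Dominates G W W' := by
  have a01 : G.Adj (f 0) (f 1) := f.map_rel_iff.mpr (by simp [houseGraph])
  have a12 : G.Adj (f 1) (f 2) := f.map_rel_iff.mpr (by simp [houseGraph])
  have a04 : G.Adj (f 0) (f 4) := f.map_rel_iff.mpr (by simp [houseGraph])
  have a43 : G.Adj (f 4) (f 3) := f.map_rel_iff.mpr (by simp [houseGraph])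
  have a32 : G.Adj (f 3) (f 2) := f.map_rel_iff.mpr (by simp [houseGraph])
  have n02 : ¬ G.Adj (f 0) (f 2) := fun h => by
    have := f.map_rel_iff.mp h; simp [houseGraph] at this
  have n31 : ¬ G.Adj (f 3) (f 1) := fun h => by
    have := f.map_rel_iff.mp h; simp [houseGraph] at this
  have hinj := f.injective
  set W' : G.Walk (f 0) (f 2) := Walk.cons a04 (Walk.cons a43 (Walk.cons a32 Walk.nil)) with hW'def
  refine core a01 a12 n02 (hinj.ne (by decide)) W' ⟨?_, ?_⟩ (by simp [hW'def]) (f 3)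
    (by simp [internals, hW'def]) (hinj.ne (by decide)) (hinj.ne (by decide))
    (hinj.ne (by decide)) n31
  · simp [Walk.isPath_def, hW'def, hinj.eq_iff]
  · intro a ha b hb hab
    simp [hW'def, Walk.support_cons] at ha hb
    rw [toSubgraph_adj_edges]
    rcases ha with rfl | rfl | rfl | rfl <;> rcases hb with rfl | rfl | rfl | rfl <;>
      rw [f.map_rel_iff] at hab <;>
      first
        | (simp [hW'def, Sym2.eq_swap]; done)
        | (exfalso; revert hab; simp [houseGraph]; done)


set_option maxHeartbeats 1000000 in
lemma domino_case {V : Type*} {G : SimpleGraph V} (f : dominoGraph ↪g G) :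
    ∃ u v : V, ¬ G.Adj u v ∧ ∃ (W W' : G.Walk u v),
      W.IsPath ∧ W.length = 2 ∧
      IsInducedPath G W' ∧ 3 ≤ W'.length ∧
      ¬ Dominates G W W' := by
  have a01 : G.Adj (f 0) (f 1) := f.map_rel_iff.mpr (by simp [dominoGraph])
  have a12 : G.Adj (f 1) (f 2) := f.map_rel_iff.mpr (by simp [dominoGraph])
  have a05 : G.Adj (f 0) (f 5) := f.map_rel_iff.mpr (by simp [dominoGraph])
  have a54 : G.Adj (f 5) (f 4) := f.map_rel_iff.mpr (by simp [dominoGraph])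
  have a43 : G.Adj (f 4) (f 3) := f.map_rel_iff.mpr (by simp [dominoGraph])
  have a32 : G.Adj (f 3) (f 2) := f.map_rel_iff.mpr (by simp [dominoGraph])
  have n02 : ¬ G.Adj (f 0) (f 2) := fun h => by
    have := f.map_rel_iff.mp h; simp [dominoGraph] at this
  have n51 : ¬ G.Adj (f 5) (f 1) := fun h => by
    have := f.map_rel_iff.mp h; simp [dominoGraph] at this
  have hinj := f.injective
  set W' : G.Walk (f 0) (f 2) :=
    Walk.cons a05 (Walk.cons a54 (Walk.cons a43 (Walk.cons a32 Walk.nil))) with hW'def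
  refine core a01 a12 n02 (hinj.ne (by decide)) W' ⟨?_, ?_⟩ (by simp [hW'def]) (f 5)
    (by simp [internals, hW'def]) (hinj.ne (by decide)) (hinj.ne (by decide))
    (hinj.ne (by decide)) n51
  · simp [Walk.isPath_def, hW'def, hinj.eq_iff]
  · intro a ha b hb hab
    simp [hW'def, Walk.support_cons] at ha hb
    rw [toSubgraph_adj_edges]
    rcases ha with rfl | rfl | rfl | rfl | rfl <;> rcases hb with rfl | rfl | rfl | rfl | rfl <;>
      rw [f.map_rel_iff] at hab <;>
      first
        | (simp [hW'def, Sym2.eq_swap]; done)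
        | (exfalso; revert hab; simp [dominoGraph]; done)

lemma hole_case {V : Type*} {G : SimpleGraph V}
    (h : HasHole G) :
    ∃ u v : V, ¬ G.Adj u v ∧ ∃ (W W' : G.Walk u v),
      W.IsPath ∧ W.length = 2 ∧
      IsInducedPath G W' ∧ 3 ≤ W'.length ∧
      ¬ Dominates G W W' := by
  obtain ⟨x, c, hcyc, hlen, hInd⟩ := h
  cases c with
  | nil => simp at hlen
  | @cons _ b1 _ h01 p1 =>
  cases p1 with
  | nil => simp at hlen
  | @cons _ b2 _ h12 p2 =>
  cases p2 with
  | nil => simp at hlen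
  | @cons _ b3 _ h23 p3 =>
  cases p3 with
  | nil => simp at hlen
  | @cons _ b4 _ h34 p4 =>
  have hp1 : (Walk.cons h12 (Walk.cons h23 (Walk.cons h34 p4))).IsPath :=
    ((Walk.cons_isCycle_iff _ _).mp hcyc).1
  have hn := hcyc.2
  simp [Walk.support_cons, List.nodup_cons] at hn
  obtain ⟨⟨hb12, hb13, hb1p⟩, ⟨hb23, hb2p⟩, hb3p, -⟩ := hn
  have hxp : x ∈ p4.support := p4.end_mem_support
  have hb4p : b4 ∈ p4.support := p4.start_mem_support
  have hx2 : ¬ b2 = x := fun h => hb2p (h ▸ hxp)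
  have hx3 : ¬ b3 = x := fun h => hb3p (h ▸ hxp)
  have hx1b : ¬ b1 = x := fun h => hb1p (h ▸ hxp)
  have hb14 : ¬ b1 = b4 := fun h => hb1p (h ▸ hb4p)
  have hedges : ∀ a b : V,
      a ∈ (Walk.cons h01 (Walk.cons h12 (Walk.cons h23 (Walk.cons h34 p4)))).support →
      b ∈ (Walk.cons h01 (Walk.cons h12 (Walk.cons h23 (Walk.cons h34 p4)))).support →
      G.Adj a b →
      s(a,b) ∈ (Walk.cons h01 (Walk.cons h12 (Walk.cons h23 (Walk.cons h34 p4)))).edges :=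
    fun a b ha hb hab => (toSubgraph_adj_edges _).mp (hInd a ha b hb hab)
  have n2x : ¬ G.Adj b2 x := by
    intro hA
    have hm := hedges b2 x (by simp) (by simp) hA
    rw [Walk.edges_cons, Walk.edges_cons, Walk.edges_cons, Walk.edges_cons,
      List.mem_cons, List.mem_cons, List.mem_cons, List.mem_cons] at hm
    rcases hm with h | h | h | h | h
    · rw [Sym2.eq_iff] at h
      rcases h with ⟨h, -⟩ | ⟨h, -⟩
      · exact hx2 h
      · exact hb12 h.symm
    · rw [Sym2.eq_iff] at h
      rcases h with ⟨h, -⟩ | ⟨-, h⟩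
      · exact hb12 h.symm
      · exact hx1b h.symm
    · rw [Sym2.eq_iff] at h
      rcases h with ⟨-, h⟩ | ⟨h, -⟩
      · exact hx3 h.symm
      · exact hb23 h
    · rw [Sym2.eq_iff] at h
      rcases h with ⟨h, -⟩ | ⟨-, h⟩
      · exact hb23 h
      · exact hx3 h.symm
    · exact hb2p (p4.fst_mem_support_of_mem_edges h)
  have n31 : ¬ G.Adj b3 b1 := by
    intro hA
    have hm := hedges b3 b1 (by simp) (by simp) hA
    rw [Walk.edges_cons, Walk.edges_cons, Walk.edges_cons, Walk.edges_cons,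
      List.mem_cons, List.mem_cons, List.mem_cons, List.mem_cons] at hm
    rcases hm with h | h | h | h | h
    · rw [Sym2.eq_iff] at h
      rcases h with ⟨h, -⟩ | ⟨h, -⟩
      · exact hx3 h
      · exact hb13 h.symm
    · rw [Sym2.eq_iff] at h
      rcases h with ⟨h, -⟩ | ⟨h, -⟩
      · exact hb13 h.symm
      · exact hb23 h.symm
    · rw [Sym2.eq_iff] at h
      rcases h with ⟨h, -⟩ | ⟨-, h⟩
      · exact hb23 h.symm
      · exact hb12 h
    · rw [Sym2.eq_iff] at h
      rcases h with ⟨-, h⟩ | ⟨h, -⟩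
      · exact hb14 h
      · exact hb3p (h ▸ hb4p)
    · exact hb3p (p4.fst_mem_support_of_mem_edges h)
  have hb1mem : b1 ∉ (Walk.cons h23 (Walk.cons h34 p4)).support := by
    simp [Walk.support_cons]
    exact ⟨hb12, hb13, hb1p⟩
  refine core h12.symm h01.symm n2x hx2
    (Walk.cons h23 (Walk.cons h34 p4)) ⟨hp1.of_cons, ?_⟩ ?_ b3 ?_
    (fun h => hb23 h.symm) (fun h => hb13 h.symm) hx3 n31
  · intro a ha b hb hab
    have ha' : a ∈ (Walk.cons h01 (Walk.cons h12 (Walk.cons h23 (Walk.cons h34 p4)))).support := by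
      simp [Walk.support_cons] at ha ⊢; tauto
    have hb' : b ∈ (Walk.cons h01 (Walk.cons h12 (Walk.cons h23 (Walk.cons h34 p4)))).support := by
      simp [Walk.support_cons] at hb ⊢; tauto
    have hm := hedges a b ha' hb' hab
    rw [Walk.edges_cons, Walk.edges_cons, List.mem_cons, List.mem_cons] at hm
    rw [toSubgraph_adj_edges]
    rcases hm with h | h | h
    · exfalso
      rw [Sym2.eq_iff] at h
      rcases h with ⟨-, h⟩ | ⟨h, -⟩
      · exact hb1mem (h ▸ hb)
      · exact hb1mem (h ▸ ha)
    · exfalso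
      rw [Sym2.eq_iff] at h
      rcases h with ⟨h, -⟩ | ⟨-, h⟩
      · exact hb1mem (h ▸ ha)
      · exact hb1mem (h ▸ hb)
    · exact h
  · simp only [Walk.length_cons] at hlen ⊢
    omega
  · simp [internals, Walk.support_cons, List.dropLast_cons_of_ne_nil p4.support_ne_nil]

theorem hhd_l2_m3_fails {V : Type*} [Fintype V] (G : SimpleGraph V)
    (hc : G.Connected)
    (h : Nonempty (houseGraph ↪g G) ∨ HasHole G ∨ Nonempty (dominoGraph ↪g G)) :
    ∃ u v : V, ¬ G.Adj u v ∧ ∃ (W W' : G.Walk u v),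
      W.IsPath ∧ W.length = 2 ∧
      IsInducedPath G W' ∧ 3 ≤ W'.length ∧
      ¬ Dominates G W W' := by
  rcases h with ⟨⟨f⟩⟩ | hh | ⟨⟨f⟩⟩
  · exact house_case f
  · exact hole_case hh
  · exact domino_case f
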